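/- arXiv:2604.09893 — 2 statements merged into one kernel-verified Lean document; each statement's English description precedes it below -/
import Mathlib

section
/- Let $0 < x < 1$ and $s$ be fixed reals, and let $h_a(c)$ be the quintic $3x(sx-2) + (21 - 3a - 3sx + 3x^2 + ax^2)c + 4x(a - 9 - sx)c^2 + 4(a + sx + 6x^2 - ax^2)c^3 + x(sx - 6 - 4a)c^4 + (3 - a - sx - 3x^2 + 3ax^2)c^5$. Then there exists $N > 0$ such that for all $a > N$, $h_a$ has at least three distinct roots in the interval $(-1,1)$: one in $(-1,-1/2)$, one in $(-1/2,1/2)$, and one in $(1/2,1)$. -/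
theorem stmt3 (s x : ℝ) (hx0 : 0 < x) (hx1 : x < 1)
    (h : ℝ → ℝ → ℝ)
    (hdef : ∀ a c, h a c = 3*x*(s*x-2) + (21 - 3*a - 3*s*x + 3*x^2 + a*x^2)*c
      + 4*x*(a - 9 - s*x)*c^2 + 4*(a + s*x + 6*x^2 - a*x^2)*c^3
      + x*(s*x - 6 - 4*a)*c^4 + (3 - a - s*x - 3*x^2 + 3*a*x^2)*c^5) :
    ∃ N : ℝ, N > 0 ∧ ∀ a > N,
      (∃ c₁, -1 < c₁ ∧ c₁ < -1/2 ∧ h a c₁ = 0) ∧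
      (∃ c₂, -1/2 < c₂ ∧ c₂ < 1/2 ∧ h a c₂ = 0) ∧
      (∃ c₃, 1/2 < c₃ ∧ c₃ < 1 ∧ h a c₃ = 0) := by
  set q1 : ℝ := (3/32)*(x^2+8*x-11) with hq1def
  set q2 : ℝ := (3/32)*(11+8*x-x^2) with hq2def
  have hq1neg : 0 < -q1 := by rw [hq1def]; nlinarith
  have hq2pos : 0 < q2 := by rw [hq2def]; nlinarith
  set p1 : ℝ := h 0 (1/2) with hp1def
  set p2 : ℝ := h 0 (-1/2) with hp2def
  set A1 : ℝ := |p1| / (-q1) with hA1def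
  set A2 : ℝ := |p2| / q2 with hA2def
  have hA1 : 0 ≤ A1 := div_nonneg (abs_nonneg _) hq1neg.le
  have hA2 : 0 ≤ A2 := div_nonneg (abs_nonneg _) hq2pos.le
  have eA1 : A1 * (-q1) = |p1| := div_mul_cancel₀ _ hq1neg.ne'
  have eA2 : A2 * q2 = |p2| := div_mul_cancel₀ _ hq2pos.ne'
  refine ⟨1 + A1 + A2, by positivity, fun a ha => ?_⟩
  have hcont : Continuous (h a) := by
    have heq : h a = fun c => 3*x*(s*x-2) + (21 - 3*a - 3*s*x + 3*x^2 + a*x^2)*c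
      + 4*x*(a - 9 - s*x)*c^2 + 4*(a + s*x + 6*x^2 - a*x^2)*c^3
      + x*(s*x - 6 - 4*a)*c^4 + (3 - a - s*x - 3*x^2 + 3*a*x^2)*c^5 :=
      funext (hdef a)
    rw [heq]; fun_prop
  have key12 : h a (1/2) = p1 + a * q1 := by
    rw [hp1def, hdef, hdef, hq1def]; ring
  have keym12 : h a (-1/2) = p2 + a * q2 := by
    rw [hp2def, hdef, hdef, hq2def]; ring
  have h1 : h a 1 = 24*(1-x)^2 := by rw [hdef]; ring
  have hm1 : h a (-1) = -(24*(1+x)^2) := by rw [hdef]; ring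
  have hpos1 : 0 < h a 1 := by rw [h1]; nlinarith
  have hnegm1 : h a (-1) < 0 := by rw [hm1]; nlinarith
  have hneg12 : h a (1/2) < 0 := by
    rw [key12]
    nlinarith [mul_pos (sub_pos.2 ha) hq1neg, mul_nonneg hA2 hq1neg.le,
      le_abs_self p1]
  have hposm12 : 0 < h a (-1/2) := by
    rw [keym12]
    nlinarith [mul_pos (sub_pos.2 ha) hq2pos, mul_nonneg hA1 hq2pos.le,
      neg_abs_le p2]
  refine ⟨?_, ?_, ?_⟩
  · obtain ⟨c, hc, hfc⟩ := intermediate_value_Ioo (by norm_num : (-1:ℝ) ≤ -1/2)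
      hcont.continuousOn ⟨hnegm1, hposm12⟩
    exact ⟨c, hc.1, hc.2, hfc⟩
  · obtain ⟨c, hc, hfc⟩ := intermediate_value_Ioo' (by norm_num : (-1/2:ℝ) ≤ 1/2)
      hcont.continuousOn ⟨hneg12, hposm12⟩
    exact ⟨c, hc.1, hc.2, hfc⟩
  · obtain ⟨c, hc, hfc⟩ := intermediate_value_Ioo (by norm_num : (1/2:ℝ) ≤ 1)
      hcont.continuousOn ⟨hneg12, hpos1⟩
    exact ⟨c, hc.1, hc.2, hfc⟩
end

section
/- For fixed $x \in (0,1)$ and $a, c$ real with $c \in (0,1)$, $c \neq x$, define $g(x,z) = 2(1-x)(3 + c^2 - 3cz + c^3 z - 2c^2 z^2) + x(1-c)(1+z)\big((3(1-c) + ac(1+c))(1-z) + (3 - c^2)(1+z)\big)$. If $a > 0$, then $g(0,z) > 0$ and $g(1,z) > 0$ for all $z \in (-1,1)$, and consequently $g(x,z) > 0$ for all $x \in (0,1)$ and $z \in (-1,1)$. -/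
theorem stmt7 (a c : ℝ) (ha : 0 < a) (hc0 : 0 < c) (hc1 : c < 1)
    (g : ℝ → ℝ → ℝ)
    (hg : ∀ x z, g x z = 2*(1-x)*(3 + c^2 - 3*c*z + c^3*z - 2*c^2*z^2)
      + x*(1-c)*(1+z)*((3*(1-c) + a*c*(1+c))*(1-z) + (3 - c^2)*(1+z))) :
    (∀ z, -1 < z → z < 1 → g 0 z > 0) ∧
    (∀ z, -1 < z → z < 1 → g 1 z > 0) ∧
    (∀ x z, 0 < x → x < 1 → -1 < z → z < 1 → g x z > 0) := by
  have hA : ∀ z : ℝ, -1 < z → z < 1 →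
      0 < 3 + c^2 - 3*c*z + c^3*z - 2*c^2*z^2 := by
    intro z hz1 hz2
    nlinarith [mul_pos (sub_pos.2 hc1) (sub_pos.2 hz2), sq_nonneg (c*z), sq_nonneg z, sq_nonneg (1 - c*z), mul_pos hc0 (mul_pos (by linarith : (0:ℝ) < 1 - z) (by linarith : (0:ℝ) < 1 + z))]
  have hB : ∀ z : ℝ, -1 < z → z < 1 →
      0 < (1-c)*(1+z)*((3*(1-c) + a*c*(1+c))*(1-z) + (3 - c^2)*(1+z)) := by
    intro z hz1 hz2
    have h1 : 0 < 1 - c := by linarith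
    have h2 : (0:ℝ) < 1 + z := by linarith
    have h3 : 0 < (3*(1-c) + a*c*(1+c))*(1-z) + (3 - c^2)*(1+z) := by
      have : 0 < 3*(1-c) + a*c*(1+c) := by positivity
      nlinarith [mul_pos this (by linarith : (0:ℝ) < 1 - z), mul_pos (by nlinarith [sq_nonneg c] : (0:ℝ) < 3 - c^2) (by linarith : (0:ℝ) < 1 + z)]
    positivity
  refine ⟨fun z hz1 hz2 => ?_, fun z hz1 hz2 => ?_, fun x z hx0 hx1 hz1 hz2 => ?_⟩
  · rw [hg]; have := hA z hz1 hz2; nlinarith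
  · rw [hg]; have := hB z hz1 hz2; nlinarith
  · rw [hg]
    have h1 := hA z hz1 hz2
    have h2 := hB z hz1 hz2
    have : 0 < (1-x) * (2*(3 + c^2 - 3*c*z + c^3*z - 2*c^2*z^2)) + x * ((1-c)*(1+z)*((3*(1-c) + a*c*(1+c))*(1-z) + (3 - c^2)*(1+z))) := by
      have := mul_pos (by linarith : (0:ℝ) < 1-x) (by linarith : 0 < 2*(3 + c^2 - 3*c*z + c^3*z - 2*c^2*z^2))
      have := mul_pos hx0 h2
      linarith
    linarith [this];
end
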